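/- Let ρ and σ be density matrices on a d-dimensional Hilbert space with (1/2)‖ρ − σ‖₁ ≤ ε ≤ 1 − 1/d. Then |S(ρ) − S(σ)| ≤ ε·log(d−1) + h₂(ε), where h₂ is the binary entropy function. -/

import Mathlib

open scoped BigOperators ComplexOrder
open Matrix

noncomputable section
attribute [local instance] Classical.propDecidable

/-- `-x log₂ x`, extended by `0` for non-positive `x`. -/
def negxlog2 (x : ℝ) : ℝ := if x ≤ 0 then 0 else -(x * Real.logb 2 x)

/-- Von Neumann entropy (base 2) of a matrix, via eigenvalues of a Hermitian matrix
(junk value `0` on non-Hermitian matrices). -/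
def entropy {n : Type} [Fintype n] [DecidableEq n] (M : Matrix n n ℂ) : ℝ :=
  if h : M.IsHermitian then ∑ i, negxlog2 (h.eigenvalues i) else 0

/-- Partial trace over the right (second) factor. -/
def ptraceRight {A R : Type} [Fintype A] [Fintype R]
    (M : Matrix (A × R) (A × R) ℂ) : Matrix A A ℂ :=
  Matrix.of fun a a' => ∑ r, M (a, r) (a', r)

/-- Partial trace over the left (first) factor. -/
def ptraceLeft {A R : Type} [Fintype A] [Fintype R]
    (M : Matrix (A × R) (A × R) ℂ) : Matrix R R ℂ :=
  Matrix.of fun r r' => ∑ a, M (a, r) (a, r')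

/-- Quantum mutual information `I(A:R) = S(A) + S(R) - S(AR)` of a bipartite matrix. -/
def mutualInfo {A R : Type} [Fintype A] [DecidableEq A] [Fintype R] [DecidableEq R]
    (M : Matrix (A × R) (A × R) ℂ) : ℝ :=
  entropy (ptraceRight M) + entropy (ptraceLeft M) - entropy M

/-- The extension `Φ ⊗ id_n` of a linear map on matrices, applied entrywise. -/
def matExt {A B n : Type} [Fintype A] [Fintype B] [Fintype n]
    (Φ : Matrix A A ℂ →ₗ[ℂ] Matrix B B ℂ) (M : Matrix (A × n) (A × n) ℂ) :
    Matrix (B × n) (B × n) ℂ :=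
  Matrix.of fun p q => Φ (Matrix.of fun a a' => M (a, p.2) (a', q.2)) p.1 q.1

/-- A linear map on matrices is a quantum channel if it is completely positive
(all extensions preserve positive semidefiniteness) and trace preserving. -/
def IsQChannel {A B : Type} [Fintype A] [Fintype B]
    (Φ : Matrix A A ℂ →ₗ[ℂ] Matrix B B ℂ) : Prop :=
  (∀ (n : Type) [Fintype n], ∀ M : Matrix (A × n) (A × n) ℂ,
      M.PosSemidef → (matExt Φ M).PosSemidef) ∧
  ∀ M : Matrix A A ℂ, (Φ M).trace = M.trace

/-- Density matrix predicate. -/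
def IsDensity {n : Type} [Fintype n] (M : Matrix n n ℂ) : Prop :=
  M.PosSemidef ∧ M.trace = 1

/-- The rank-one matrix `|v⟩⟨v|`. -/
def pureMat {d : Type} (v : d → ℂ) : Matrix d d ℂ :=
  Matrix.of fun i j => v i * (starRingEnd ℂ) (v j)

/-- `ψ` (a vector on `A ⊗ A' ⊗ R`) purifies the bipartite state `ρ` on `A ⊗ R`. -/
def Purifies {A A' R : Type} [Fintype A'] (ψ : A × A' × R → ℂ)
    (ρ : Matrix (A × R) (A × R) ℂ) : Prop :=
  ∀ a r a' r', ρ (a, r) (a', r') = ∑ x, ψ (a, x, r) * (starRingEnd ℂ) (ψ (a', x, r'))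

/-- The state on `A ⊗ A''` obtained from the purification `ψ` by applying `Φ` to the
purifying system `A'` and tracing out `R`. -/
def epOut {A A' A'' R : Type} [Fintype A] [Fintype A'] [Fintype A''] [Fintype R]
    (ψ : A × A' × R → ℂ) (Φ : Matrix A' A' ℂ →ₗ[ℂ] Matrix A'' A'' ℂ) :
    Matrix (A × A'') (A × A'') ℂ :=
  Matrix.of fun p q => ∑ r, Φ (Matrix.of fun x x' =>
      ψ (p.1, x, r) * (starRingEnd ℂ) (ψ (q.1, x', r))) p.2 q.2

/-- Witness predicate for the entanglement of purification. -/
def EpWitness {A R : Type} [Fintype A] [DecidableEq A] [Fintype R]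
    (ρ : Matrix (A × R) (A × R) ℂ) (e : ℝ)
    (A' A'' : Type) [Fintype A'] [Fintype A''] [DecidableEq A''] : Prop :=
  ∃ (ψ : A × A' × R → ℂ) (Φ : Matrix A' A' ℂ →ₗ[ℂ] Matrix A'' A'' ℂ),
    Purifies ψ ρ ∧ IsQChannel Φ ∧ e = entropy (epOut ψ Φ)

/-- Entanglement of purification `E_p(A:R)` of a bipartite matrix: the infimum of
`S(A A'')` over purifications and channels applied to the purifying system. -/
def Ep {A R : Type} [Fintype A] [DecidableEq A] [Fintype R]
    (ρ : Matrix (A × R) (A × R) ℂ) : ℝ :=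
  sInf { e : ℝ | ∃ (A' A'' : Type) (i1 : Fintype A') (i2 : Fintype A'')
      (i3 : DecidableEq A''), @EpWitness A R _ _ _ ρ e A' A'' i1 i2 i3 }

/-- The positive semidefinite square root of a positive semidefinite matrix
(the definition Mathlib had, since removed from Mathlib). -/
def Matrix.PosSemidef.sqrt {n 𝕜 : Type*} [Fintype n] [DecidableEq n] [RCLike 𝕜]
    {A : Matrix n n 𝕜} (hA : A.PosSemidef) : Matrix n n 𝕜 :=
  (hA.1.eigenvectorUnitary : Matrix n n 𝕜) * diagonal ((↑) ∘ (√·) ∘ hA.1.eigenvalues) *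
    (star hA.1.eigenvectorUnitary : Matrix n n 𝕜)

/-- Fidelity `F(ρ,σ) = (tr √(√ρ σ √ρ))²` (junk value `0` off positive semidefinite pairs). -/
def fidelity {n : Type} [Fintype n] [DecidableEq n] (ρ σ : Matrix n n ℂ) : ℝ :=
  if h : ρ.PosSemidef ∧ σ.PosSemidef then
    if h2 : (h.1.sqrt * σ * h.1.sqrt).PosSemidef then (h2.sqrt.trace.re) ^ 2 else 0
  else 0

/-- Trace norm (sum of singular values) of a complex matrix. -/
def traceNorm {n : Type} [Fintype n] [DecidableEq n] (M : Matrix n n ℂ) : ℝ :=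
  if h : (Mᴴ * M).PosSemidef then h.sqrt.trace.re else 0

/-- Binary entropy function (base 2). -/
def binEntropy (x : ℝ) : ℝ := -(x * Real.logb 2 x) - (1 - x) * Real.logb 2 (1 - x)


open Finset in
lemma negMulLog_sum_le {ι : Type*} (s : Finset ι) (x : ι → ℝ) (hx : ∀ i ∈ s, 0 ≤ x i) :
    Real.negMulLog (∑ i ∈ s, x i) ≤ ∑ i ∈ s, Real.negMulLog (x i) := by
  have hT : Real.negMulLog (∑ i ∈ s, x i) = ∑ i ∈ s, -(x i * Real.log (∑ j ∈ s, x j)) := by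
    rw [Real.negMulLog, neg_mul, Finset.sum_mul, ← Finset.sum_neg_distrib]
  rw [hT]
  refine Finset.sum_le_sum fun i hi => ?_
  rcases eq_or_lt_of_le (hx i hi) with h0 | h0
  · simp [← h0, Real.negMulLog]
  · rw [Real.negMulLog, neg_mul, neg_le_neg_iff]
    refine mul_le_mul_of_nonneg_left ?_ (hx i hi)
    exact Real.log_le_log h0 (Finset.single_le_sum hx hi)

lemma sum_negMulLog_le_log_card {ι : Type*} (s : Finset ι) (u : ι → ℝ)
    (h0 : ∀ i ∈ s, 0 ≤ u i) (h1 : ∑ i ∈ s, u i = 1) :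
    ∑ i ∈ s, Real.negMulLog (u i) ≤ Real.log s.card := by
  have hne : s.Nonempty := by
    rcases s.eq_empty_or_nonempty with h | h
    · simp [h] at h1
    · exact h
  have hN : (0:ℝ) < s.card := by exact_mod_cast Finset.card_pos.mpr hne
  have jensen := Real.concaveOn_negMulLog.le_map_sum (t := s)
    (w := fun _ => (s.card : ℝ)⁻¹) (p := u)
    (fun i _ => by positivity)
    (by rw [Finset.sum_const, nsmul_eq_mul]; field_simp)
    (fun i hi => Set.mem_Ici.2 (h0 i hi))
  simp only [smul_eq_mul, ← Finset.mul_sum, h1, mul_one] at jensen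
  have hval : Real.negMulLog ((s.card : ℝ)⁻¹) = (s.card : ℝ)⁻¹ * Real.log s.card := by
    rw [Real.negMulLog, Real.log_inv]; ring
  rw [hval] at jensen
  calc ∑ i ∈ s, Real.negMulLog (u i)
      = (s.card : ℝ) * ((s.card:ℝ)⁻¹ * ∑ i ∈ s, Real.negMulLog (u i)) := by field_simp
    _ ≤ (s.card : ℝ) * ((s.card : ℝ)⁻¹ * Real.log s.card) :=
        mul_le_mul_of_nonneg_left jensen hN.le
    _ = Real.log s.card := by field_simp

lemma classical_core {ι : Type*} [Fintype ι] [DecidableEq ι] (p q : ι → ℝ)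
    (hp0 : ∀ i, 0 ≤ p i) (hq0 : ∀ i, 0 ≤ q i)
    (hp1 : ∑ i, p i = 1) (hq1 : ∑ i, q i = 1) :
    ∑ i, Real.negMulLog (p i) - ∑ i, Real.negMulLog (q i) ≤
      Real.binEntropy ((∑ i, |p i - q i|) / 2) +
        ((∑ i, |p i - q i|) / 2) * Real.log ((Fintype.card ι : ℝ) - 1) := by
  classical
  set t : ℝ := (∑ i, |p i - q i|) / 2 with ht
  set a : ι → ℝ := fun i => max (p i - q i) 0 with ha
  set b : ι → ℝ := fun i => max (q i - p i) 0 with hb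
  set m : ι → ℝ := fun i => min (p i) (q i) with hm
  have ha0 : ∀ i, 0 ≤ a i := fun i => le_max_right _ _
  have hb0 : ∀ i, 0 ≤ b i := fun i => le_max_right _ _
  have hm0 : ∀ i, 0 ≤ m i := fun i => le_min (hp0 i) (hq0 i)
  have hab : ∀ i, a i * b i = 0 := by
    intro i
    rcases le_total (p i) (q i) with h | h
    · have : a i = 0 := max_eq_right (by linarith)
      simp [this]
    · have : b i = 0 := max_eq_right (by linarith)
      simp [this]
  have hpm : ∀ i, p i = m i + a i := by
    intro i; rcases le_total (p i) (q i) with h | h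
    · rw [hm, ha]; simp only [min_eq_left h, max_eq_right (by linarith : p i - q i ≤ 0)]; ring
    · rw [hm, ha]; simp only [min_eq_right h, max_eq_left (by linarith : (0:ℝ) ≤ p i - q i)]; ring
  have hqm : ∀ i, q i = m i + b i := by
    intro i; rcases le_total (p i) (q i) with h | h
    · rw [hm, hb]; simp only [min_eq_left h, max_eq_left (by linarith : (0:ℝ) ≤ q i - p i)]; ring
    · rw [hm, hb]; simp only [min_eq_right h, max_eq_right (by linarith : q i - p i ≤ 0)]; ring
  have habs : ∀ i, |p i - q i| = a i + b i := by
    intro i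
    have hA : a i = max (p i - q i) 0 := rfl
    have hB : b i = max (q i - p i) 0 := rfl
    rcases le_total (p i) (q i) with h | h
    · rw [abs_of_nonpos (by linarith), hA, hB, max_eq_right (by linarith : p i - q i ≤ 0),
        max_eq_left (by linarith : (0:ℝ) ≤ q i - p i)]; ring
    · rw [abs_of_nonneg (by linarith), hA, hB, max_eq_left (by linarith : (0:ℝ) ≤ p i - q i),
        max_eq_right (by linarith : q i - p i ≤ 0)]; ring
  have hsum_ab : ∑ i, a i - ∑ i, b i = 0 := by
    rw [← Finset.sum_sub_distrib]
    have : ∀ i ∈ Finset.univ, a i - b i = p i - q i := by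
      intro i _; rw [hpm i, hqm i]; ring
    rw [Finset.sum_congr rfl this, Finset.sum_sub_distrib, hp1, hq1, sub_self]
  have hsa : ∑ i, a i = t := by
    have h2 : ∑ i, a i + ∑ i, b i = 2 * t := by
      rw [ht, ← Finset.sum_add_distrib]
      rw [Finset.sum_congr rfl (fun i _ => (habs i).symm)]
      ring
    linarith
  have hsb : ∑ i, b i = t := by linarith
  have ht0 : 0 ≤ t := by
    rw [← hsa]; exact Finset.sum_nonneg fun i _ => ha0 i
  rcases eq_or_lt_of_le ht0 with ht0' | ht0'
  · -- t = 0 : p = q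
    have hb' : ∀ i, b i = 0 := by
      intro i
      have := Finset.sum_eq_zero_iff_of_nonneg (fun i _ => hb0 i) |>.mp (by rw [hsb, ← ht0'])
      exact this i (Finset.mem_univ i)
    have ha' : ∀ i, a i = 0 := by
      intro i
      have := Finset.sum_eq_zero_iff_of_nonneg (fun i _ => ha0 i) |>.mp (by rw [hsa, ← ht0'])
      exact this i (Finset.mem_univ i)
    have hpq : ∀ i, p i = q i := fun i => by rw [hpm i, hqm i, ha' i, hb' i]
    have : ∑ i, Real.negMulLog (p i) = ∑ i, Real.negMulLog (q i) :=
      Finset.sum_congr rfl fun i _ => by rw [hpq i]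
    rw [this, sub_self, ← ht0']
    simp
  -- t > 0
  have htne : t ≠ 0 := ne_of_gt ht0'
  -- the coupling
  set r : ι → ι → ℝ := fun i j => if i = j then m i else a i * b j / t with hr
  have hr0 : ∀ i j, 0 ≤ r i j := by
    intro i j; rw [hr]; dsimp only
    split
    · exact hm0 i
    · positivity
  have hrow : ∀ i, p i = ∑ j, r i j := by
    intro i
    rw [← Finset.add_sum_erase Finset.univ (r i) (Finset.mem_univ i)]
    have h1 : r i i = m i := by rw [hr]; simp
    have h2 : ∀ j ∈ Finset.univ.erase i, r i j = b j * (a i / t) := by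
      intro j hj
      have hji : j ≠ i := Finset.ne_of_mem_erase hj
      rw [hr]; simp only
      rw [if_neg (fun h => hji h.symm)]; ring
    rw [h1, Finset.sum_congr rfl h2, ← Finset.sum_mul,
      Finset.sum_erase_eq_sub (Finset.mem_univ i), hsb]
    rcases mul_eq_zero.mp (hab i) with h | h
    · rw [hpm i, h]; ring
    · rw [hpm i, h]; field_simp; ring
  -- step 1 : subadditivity over rows
  have step1 : ∑ i, Real.negMulLog (p i) ≤ ∑ j, ∑ i, Real.negMulLog (r i j) := by
    rw [Finset.sum_comm]
    refine Finset.sum_le_sum fun i _ => ?_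
    rw [hrow i]
    exact negMulLog_sum_le Finset.univ (r i) (fun j _ => hr0 i j)
  -- step 2 : column bound
  have hnel : Nonempty ι := by
    by_contra h
    rw [not_nonempty_iff] at h
    rw [Finset.univ_eq_empty, Finset.sum_empty] at hp1
    exact one_ne_zero hp1.symm
  have hcard1 : 1 ≤ Fintype.card ι := Fintype.card_pos_iff.mpr hnel
  have step2 : ∀ j, ∑ i, Real.negMulLog (r i j) ≤
      Real.negMulLog (q j) + q j * Real.binEntropy (b j / q j)
        + b j * Real.log ((Fintype.card ι : ℝ) - 1) := by
    intro j
    rw [← Finset.add_sum_erase Finset.univ (fun i => Real.negMulLog (r i j))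
      (Finset.mem_univ j)]
    have h1 : r j j = m j := by rw [hr]; simp
    have h2 : ∀ i ∈ Finset.univ.erase j, r i j = (a i / t) * b j := by
      intro i hi
      have hji : i ≠ j := Finset.ne_of_mem_erase hi
      rw [hr]; simp only
      rw [if_neg hji]; ring
    rcases eq_or_lt_of_le (hb0 j) with hbj | hbj
    · -- b j = 0
      have hterm : ∀ i ∈ Finset.univ.erase j, Real.negMulLog (r i j) = 0 := by
        intro i hi; rw [h2 i hi, ← hbj, mul_zero, Real.negMulLog_zero]
      rw [h1, Finset.sum_eq_zero hterm, ← hbj]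
      have : q j = m j := by rw [hqm j, ← hbj, add_zero]
      rw [this]; simp
    · -- b j > 0
      have haj : a j = 0 := by
        rcases mul_eq_zero.mp (hab j) with h | h
        · exact h
        · exact absurd h (ne_of_gt hbj)
      have hqj : 0 < q j := by rw [hqm j]; have := hm0 j; linarith
      have hterm : ∀ i ∈ Finset.univ.erase j, Real.negMulLog (r i j) =
          b j * Real.negMulLog (a i / t) + (a i / t) * Real.negMulLog (b j) := by
        intro i hi; rw [h2 i hi, Real.negMulLog_mul]
      have hTa : ∑ i ∈ Finset.univ.erase j, a i / t = 1 := by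
        rw [← Finset.sum_div, Finset.sum_erase_eq_sub (Finset.mem_univ j), hsa, haj,
          sub_zero, div_self htne]
      have hSa : ∑ i ∈ Finset.univ.erase j, Real.negMulLog (a i / t) ≤
          Real.log ((Fintype.card ι : ℝ) - 1) := by
        have := sum_negMulLog_le_log_card (Finset.univ.erase j) (fun i => a i / t)
          (fun i _ => div_nonneg (ha0 i) ht0) hTa
        have hcast : ((Finset.univ.erase j).card : ℝ) = (Fintype.card ι : ℝ) - 1 := by
          rw [Finset.card_erase_of_mem (Finset.mem_univ j), Finset.card_univ]
          rw [Nat.cast_sub hcard1]; norm_num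
        rwa [hcast] at this
      have hexp : ∑ i ∈ Finset.univ.erase j, Real.negMulLog (r i j) =
          b j * (∑ i ∈ Finset.univ.erase j, Real.negMulLog (a i / t))
            + Real.negMulLog (b j) := by
        rw [Finset.sum_congr rfl hterm, Finset.sum_add_distrib, ← Finset.mul_sum,
          ← Finset.sum_mul, hTa, one_mul]
      -- the key exact identity
      have hiden : Real.negMulLog (m j) + Real.negMulLog (b j) =
          Real.negMulLog (q j) + q j * Real.binEntropy (b j / q j) := by
        have h1mb : 1 - b j / q j = m j / q j := by
          field_simp
          linarith [hqm j]
        have e1 : Real.negMulLog (b j) = (b j / q j) * Real.negMulLog (q j)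
            + q j * Real.negMulLog (b j / q j) := by
          conv_lhs => rw [show b j = q j * (b j / q j) by field_simp]
          rw [Real.negMulLog_mul]
        have e2 : Real.negMulLog (m j) = (m j / q j) * Real.negMulLog (q j)
            + q j * Real.negMulLog (m j / q j) := by
          conv_lhs => rw [show m j = q j * (m j / q j) by field_simp]
          rw [Real.negMulLog_mul]
        have hsum1 : b j / q j + m j / q j = 1 := by
          field_simp
          linarith [hqm j]
        rw [Real.binEntropy_eq_negMulLog_add_negMulLog_one_sub, h1mb, e1, e2]
        linear_combination Real.negMulLog (q j) * hsum1
      calc Real.negMulLog (r j j) + ∑ i ∈ Finset.univ.erase j, Real.negMulLog (r i j)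
          = Real.negMulLog (m j) + (b j * (∑ i ∈ Finset.univ.erase j,
              Real.negMulLog (a i / t)) + Real.negMulLog (b j)) := by rw [h1, hexp]
        _ ≤ Real.negMulLog (m j) + (b j * Real.log ((Fintype.card ι : ℝ) - 1)
              + Real.negMulLog (b j)) := by
            have := mul_le_mul_of_nonneg_left hSa (le_of_lt hbj)
            linarith
        _ = Real.negMulLog (q j) + q j * Real.binEntropy (b j / q j)
              + b j * Real.log ((Fintype.card ι : ℝ) - 1) := by
            linarith [hiden]
  -- step 4 : Jensen for binEntropy
  have hbq : ∀ j, q j * (b j / q j) = b j := by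
    intro j
    rcases eq_or_lt_of_le (hq0 j) with h | h
    · have hbj : b j = 0 := by
        have := hm0 j
        have := hb0 j
        have := hqm j
        linarith [hqm j, hm0 j, hb0 j, h.symm ▸ (hqm j)]
      rw [hbj, ← h]; ring
    · field_simp
  have jensen : ∑ j, q j * Real.binEntropy (b j / q j) ≤ Real.binEntropy t := by
    have hmem : ∀ j ∈ Finset.univ, b j / q j ∈ Set.Icc (0:ℝ) 1 := by
      intro j _
      constructor
      · rcases eq_or_lt_of_le (hq0 j) with h | h
        · positivity
        · positivity
      · rcases eq_or_lt_of_le (hq0 j) with h | h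
        · have hbj : q j * (b j / q j) = b j := hbq j
          rw [← h] at hbj
          simp at hbj
          rw [div_eq_zero_iff.mpr]
          · norm_num
          · left; linarith [hbj, hb0 j]
        · rw [div_le_one h]
          have := hm0 j
          linarith [hqm j]
    have := (Real.strictConcave_binEntropy.concaveOn).le_map_sum
      (fun j (_ : j ∈ Finset.univ) => hq0 j) hq1 hmem
    simp only [smul_eq_mul] at this
    have hst : ∑ j, q j * (b j / q j) = t := by
      rw [Finset.sum_congr rfl (fun j _ => hbq j), hsb]
    rwa [hst] at this
  -- combine
  have final : ∑ i, Real.negMulLog (p i) ≤ ∑ j, Real.negMulLog (q j)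
      + Real.binEntropy t + t * Real.log ((Fintype.card ι : ℝ) - 1) := by
    calc ∑ i, Real.negMulLog (p i) ≤ ∑ j, ∑ i, Real.negMulLog (r i j) := step1
      _ ≤ ∑ j, (Real.negMulLog (q j) + q j * Real.binEntropy (b j / q j)
            + b j * Real.log ((Fintype.card ι : ℝ) - 1)) :=
          Finset.sum_le_sum fun j _ => step2 j
      _ = ∑ j, Real.negMulLog (q j) + ∑ j, q j * Real.binEntropy (b j / q j)
            + t * Real.log ((Fintype.card ι : ℝ) - 1) := by
          rw [Finset.sum_add_distrib, Finset.sum_add_distrib, ← Finset.sum_mul, hsb]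
      _ ≤ ∑ j, Real.negMulLog (q j) + Real.binEntropy t
            + t * Real.log ((Fintype.card ι : ℝ) - 1) := by linarith [jensen]
  linarith [final]

lemma classical_fannes {ι : Type*} [Fintype ι] [DecidableEq ι] (p q : ι → ℝ)
    (hp0 : ∀ i, 0 ≤ p i) (hq0 : ∀ i, 0 ≤ q i)
    (hp1 : ∑ i, p i = 1) (hq1 : ∑ i, q i = 1) (ε : ℝ)
    (hε : (∑ i, |p i - q i|) / 2 ≤ ε) (hεd : ε ≤ 1 - 1 / (Fintype.card ι : ℝ)) :
    |∑ i, Real.negMulLog (p i) - ∑ i, Real.negMulLog (q i)| ≤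
      Real.binEntropy ε + ε * Real.log ((Fintype.card ι : ℝ) - 1) := by
  classical
  set t : ℝ := (∑ i, |p i - q i|) / 2 with ht
  have ht0 : 0 ≤ t := by
    rw [ht]
    have : 0 ≤ ∑ i, |p i - q i| := Finset.sum_nonneg fun i _ => abs_nonneg _
    linarith
  have hnel : Nonempty ι := by
    by_contra h
    rw [not_nonempty_iff] at h
    rw [Finset.univ_eq_empty, Finset.sum_empty] at hp1
    exact one_ne_zero hp1.symm
  have hcard1 : 1 ≤ Fintype.card ι := Fintype.card_pos_iff.mpr hnel
  have hmono : Real.binEntropy t + t * Real.log ((Fintype.card ι : ℝ) - 1) ≤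
      Real.binEntropy ε + ε * Real.log ((Fintype.card ι : ℝ) - 1) := by
    rcases eq_or_lt_of_le (show t ≤ ε from hε) with h | h
    · rw [h]
    · rcases eq_or_lt_of_le hcard1 with hc | hc
      · -- card = 1 : ε ≤ 0 contradiction with t < ε, 0 ≤ t
        exfalso
        rw [← hc] at hεd
        norm_num at hεd
        linarith
      · have hc2 : 2 ≤ Fintype.card ι := hc
        have := (Real.qaryEntropy_strictMonoOn (q := Fintype.card ι) hc2).monotoneOn
          (a := t) (b := ε)
          ⟨ht0, by rw [one_div]; rw [one_div] at hεd; linarith⟩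
          ⟨le_trans ht0 hε, by rw [one_div]; rw [one_div] at hεd; linarith⟩ hε
        rw [Real.qaryEntropy, Real.qaryEntropy] at this
        have hcast : ((Fintype.card ι - 1 : ℤ) : ℝ) = (Fintype.card ι : ℝ) - 1 := by
          push_cast; ring
        rw [hcast] at this
        linarith
  have h1 := classical_core p q hp0 hq0 hp1 hq1
  have h2 := classical_core q p hq0 hp0 hq1 hp1
  have hsym : ∑ i, |q i - p i| = ∑ i, |p i - q i| :=
    Finset.sum_congr rfl fun i _ => abs_sub_comm _ _
  rw [hsym] at h2
  rw [← ht] at h1 h2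
  rw [abs_le]
  constructor
  · linarith [h2, hmono]
  · linarith [h1, hmono]

namespace FannesAux

lemma sum_dotProduct' {ι n : Type*} [Fintype n] (s : Finset ι) (f : ι → n → ℂ) (y : n → ℂ) :
    (∑ i ∈ s, f i) ⬝ᵥ y = ∑ i ∈ s, f i ⬝ᵥ y := by
  simp only [dotProduct, Finset.sum_apply, Finset.sum_mul]
  exact Finset.sum_comm

lemma dotProduct_sum' {ι n : Type*} [Fintype n] (s : Finset ι) (y : n → ℂ) (f : ι → n → ℂ) :
    y ⬝ᵥ (∑ i ∈ s, f i) = ∑ i ∈ s, y ⬝ᵥ f i := by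
  simp only [dotProduct, Finset.sum_apply, Finset.mul_sum]
  exact Finset.sum_comm

variable {n : Type} [Fintype n] [DecidableEq n] {A B : Matrix n n ℂ}

lemma ev_ortho (hA : A.IsHermitian) (i j : n) :
    star ⇑(hA.eigenvectorBasis i) ⬝ᵥ ⇑(hA.eigenvectorBasis j) = if i = j then 1 else 0 := by
  have h := orthonormal_iff_ite.mp hA.eigenvectorBasis.orthonormal i j
  rwa [EuclideanSpace.inner_eq_star_dotProduct, dotProduct_comm] at h

lemma dot_expand (hA : A.IsHermitian) (s : Finset n) (c d : n → ℂ) :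
    star (∑ i ∈ s, c i • ⇑(hA.eigenvectorBasis i)) ⬝ᵥ
      (∑ i ∈ s, d i • ⇑(hA.eigenvectorBasis i)) = ∑ i ∈ s, star (c i) * d i := by
  rw [star_sum, sum_dotProduct']
  refine Finset.sum_congr rfl fun i hi => ?_
  rw [star_smul, smul_dotProduct, dotProduct_sum']
  have h1 : ∀ j ∈ s, star ⇑(hA.eigenvectorBasis i) ⬝ᵥ (d j • ⇑(hA.eigenvectorBasis j))
      = if i = j then d j else 0 := by
    intro j _
    rw [dotProduct_smul, ev_ortho hA i j]
    simp [smul_eq_mul, mul_ite]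
  rw [Finset.sum_congr rfl h1, Finset.sum_ite_eq, if_pos hi]
  simp [smul_eq_mul]

lemma ev_expand (hA : A.IsHermitian) (x : n → ℂ) :
    x = ∑ i, (star ⇑(hA.eigenvectorBasis i) ⬝ᵥ x) • ⇑(hA.eigenvectorBasis i) := by
  have hUU : (hA.eigenvectorUnitary : Matrix n n ℂ) * star (hA.eigenvectorUnitary : Matrix n n ℂ)
      = 1 := Matrix.mem_unitaryGroup_iff.mp hA.eigenvectorUnitary.2
  funext k
  have h0 : x k = ((hA.eigenvectorUnitary : Matrix n n ℂ) *ᵥ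
      (star (hA.eigenvectorUnitary : Matrix n n ℂ) *ᵥ x)) k := by
    rw [Matrix.mulVec_mulVec, hUU, Matrix.one_mulVec]
  rw [h0, Finset.sum_apply]
  simp only [Matrix.mulVec, dotProduct, Pi.smul_apply, smul_eq_mul,
    Matrix.star_apply, Pi.star_apply]
  refine Finset.sum_congr rfl fun j _ => ?_
  exact mul_comm _ _

lemma span_coeff_zero (hA : A.IsHermitian) (s : Finset n) (x : n → ℂ)
    (hx : x ∈ Submodule.span ℂ ((fun i => ⇑(hA.eigenvectorBasis i)) '' ↑s))
    (i : n) (hi : i ∉ s) : star ⇑(hA.eigenvectorBasis i) ⬝ᵥ x = 0 := by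
  induction hx using Submodule.span_induction with
  | mem y hy =>
      obtain ⟨j, hj, rfl⟩ := hy
      rw [ev_ortho hA i j, if_neg]
      rintro rfl; exact hi hj
  | zero => exact dotProduct_zero _
  | add y z _ _ hy hz => rw [dotProduct_add, hy, hz, add_zero]
  | smul c y _ hy => rw [dotProduct_smul, hy, smul_zero]

lemma mem_span_repr (hA : A.IsHermitian) (s : Finset n) (x : n → ℂ)
    (hx : x ∈ Submodule.span ℂ ((fun i => ⇑(hA.eigenvectorBasis i)) '' ↑s)) :
    x = ∑ i ∈ s, (star ⇑(hA.eigenvectorBasis i) ⬝ᵥ x) • ⇑(hA.eigenvectorBasis i) := by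
  conv_lhs => rw [ev_expand hA x]
  exact (Finset.sum_subset (Finset.subset_univ s) (fun i _ hi => by
    rw [span_coeff_zero hA s x hx i hi, zero_smul])).symm

lemma mulVec_span_repr (hA : A.IsHermitian) (s : Finset n) (x : n → ℂ)
    (hx : x ∈ Submodule.span ℂ ((fun i => ⇑(hA.eigenvectorBasis i)) '' ↑s)) :
    A *ᵥ x = ∑ i ∈ s, ((star ⇑(hA.eigenvectorBasis i) ⬝ᵥ x) * (hA.eigenvalues i : ℂ))
      • ⇑(hA.eigenvectorBasis i) := by
  conv_lhs => rw [mem_span_repr hA s x hx]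
  show A.mulVecLin _ = _
  rw [map_sum]
  refine Finset.sum_congr rfl fun i _ => ?_
  rw [LinearMap.map_smul]
  show (star ⇑(hA.eigenvectorBasis i) ⬝ᵥ x) • (A *ᵥ ⇑(hA.eigenvectorBasis i)) = _
  rw [hA.mulVec_eigenvectorBasis]
  funext k
  simp only [Pi.smul_apply, smul_eq_mul, Complex.real_smul]
  ring

lemma quad_re (hA : A.IsHermitian) (s : Finset n) (x : n → ℂ)
    (hx : x ∈ Submodule.span ℂ ((fun i => ⇑(hA.eigenvectorBasis i)) '' ↑s)) :
    (star x ⬝ᵥ (A *ᵥ x)).re = ∑ i ∈ s,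
      hA.eigenvalues i * Complex.normSq (star ⇑(hA.eigenvectorBasis i) ⬝ᵥ x) := by
  have h : star x ⬝ᵥ (A *ᵥ x) = ∑ i ∈ s,
      star (star ⇑(hA.eigenvectorBasis i) ⬝ᵥ x) *
        ((star ⇑(hA.eigenvectorBasis i) ⬝ᵥ x) * (hA.eigenvalues i : ℂ)) := by
    rw [show star x = star (∑ i ∈ s, (star ⇑(hA.eigenvectorBasis i) ⬝ᵥ x) •
        ⇑(hA.eigenvectorBasis i)) from congrArg star (mem_span_repr hA s x hx),
      mulVec_span_repr hA s x hx]
    exact dot_expand hA s _ _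
  rw [h, Complex.re_sum]
  refine Finset.sum_congr rfl fun i _ => ?_
  rw [← mul_assoc]
  rw [show star (star ⇑(hA.eigenvectorBasis i) ⬝ᵥ x) * (star ⇑(hA.eigenvectorBasis i) ⬝ᵥ x)
    = (Complex.normSq (star ⇑(hA.eigenvectorBasis i) ⬝ᵥ x) : ℂ) from
      Complex.normSq_eq_conj_mul_self.symm]
  rw [← Complex.ofReal_mul]
  rw [Complex.ofReal_re]
  ring

lemma norm_re (hA : A.IsHermitian) (s : Finset n) (x : n → ℂ)
    (hx : x ∈ Submodule.span ℂ ((fun i => ⇑(hA.eigenvectorBasis i)) '' ↑s)) :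
    (star x ⬝ᵥ x).re = ∑ i ∈ s, Complex.normSq (star ⇑(hA.eigenvectorBasis i) ⬝ᵥ x) := by
  have h : star x ⬝ᵥ x = ∑ i ∈ s,
      star (star ⇑(hA.eigenvectorBasis i) ⬝ᵥ x) * (star ⇑(hA.eigenvectorBasis i) ⬝ᵥ x) := by
    conv_lhs => rw [mem_span_repr hA s x hx]
    exact dot_expand hA s _ _
  rw [h, Complex.re_sum]
  refine Finset.sum_congr rfl fun i _ => ?_
  rw [show star (star ⇑(hA.eigenvectorBasis i) ⬝ᵥ x) * (star ⇑(hA.eigenvectorBasis i) ⬝ᵥ x)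
    = (Complex.normSq (star ⇑(hA.eigenvectorBasis i) ⬝ᵥ x) : ℂ) from
      Complex.normSq_eq_conj_mul_self.symm]
  exact Complex.ofReal_re _

lemma quad_le_of_le (hA : A.IsHermitian) (s : Finset n) (C : ℝ)
    (hC : ∀ i ∈ s, hA.eigenvalues i ≤ C) (x : n → ℂ)
    (hx : x ∈ Submodule.span ℂ ((fun i => ⇑(hA.eigenvectorBasis i)) '' ↑s)) :
    (star x ⬝ᵥ (A *ᵥ x)).re ≤ C * (star x ⬝ᵥ x).re := by
  rw [quad_re hA s x hx, norm_re hA s x hx, Finset.mul_sum]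
  exact Finset.sum_le_sum fun i hi =>
    mul_le_mul_of_nonneg_right (hC i hi) (Complex.normSq_nonneg _)

lemma quad_ge_of_ge (hA : A.IsHermitian) (s : Finset n) (C : ℝ)
    (hC : ∀ i ∈ s, C ≤ hA.eigenvalues i) (x : n → ℂ)
    (hx : x ∈ Submodule.span ℂ ((fun i => ⇑(hA.eigenvectorBasis i)) '' ↑s)) :
    C * (star x ⬝ᵥ x).re ≤ (star x ⬝ᵥ (A *ᵥ x)).re := by
  rw [quad_re hA s x hx, norm_re hA s x hx, Finset.mul_sum]
  exact Finset.sum_le_sum fun i hi =>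
    mul_le_mul_of_nonneg_right (hC i hi) (Complex.normSq_nonneg _)

lemma eigBasis_li (hA : A.IsHermitian) :
    LinearIndependent ℂ (fun i => (⇑(hA.eigenvectorBasis i) : n → ℂ)) :=
  hA.eigenvectorBasis.orthonormal.linearIndependent.map'
    (WithLp.linearEquiv 2 ℂ (n → ℂ)).toLinearMap (LinearEquiv.ker _)

lemma span_eig_finrank (hA : A.IsHermitian) (s : Finset n) :
    Module.finrank ℂ (Submodule.span ℂ ((fun i => ⇑(hA.eigenvectorBasis i)) '' ↑s)) = s.card := by
  have li : LinearIndependent ℂ ((fun i => (⇑(hA.eigenvectorBasis i) : n → ℂ)) ∘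
      (Subtype.val : {x // x ∈ s} → n)) :=
    (eigBasis_li hA).comp _ Subtype.val_injective
  have him : Set.range ((fun i => (⇑(hA.eigenvectorBasis i) : n → ℂ)) ∘
      (Subtype.val : {x // x ∈ s} → n)) = (fun i => ⇑(hA.eigenvectorBasis i)) '' ↑s := by
    rw [Set.range_comp, Subtype.range_coe]
  rw [← him, finrank_span_eq_card li, Fintype.card_coe]

lemma exists_mem_inter (V W : Submodule ℂ (n → ℂ))
    (h : Fintype.card n < Module.finrank ℂ V + Module.finrank ℂ W) :
    ∃ x : n → ℂ, x ≠ 0 ∧ x ∈ V ∧ x ∈ W := by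
  have hsum := Submodule.finrank_sup_add_finrank_inf_eq V W
  have hle : Module.finrank ℂ ↥(V ⊔ W) ≤ Fintype.card n := by
    have := Submodule.finrank_le (V ⊔ W)
    rwa [Module.finrank_fintype_fun_eq_card] at this
  have hpos : 0 < Module.finrank ℂ ↥(V ⊓ W) := by omega
  have hne : V ⊓ W ≠ ⊥ := by
    intro hbot
    rw [hbot, finrank_bot] at hpos
    exact lt_irrefl 0 hpos
  obtain ⟨x, hx, hx0⟩ := (Submodule.ne_bot_iff _).mp hne
  exact ⟨x, hx0, hx.1, hx.2⟩

/-- ascending sorted eigenvalues -/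
def sortedEig (hA : A.IsHermitian) : Fin (Fintype.card n) → ℝ :=
  (hA.eigenvalues ∘ ⇑(Fintype.equivFin n).symm) ∘
    ⇑(Tuple.sort (hA.eigenvalues ∘ ⇑(Fintype.equivFin n).symm))

def eigPerm (hA : A.IsHermitian) : Fin (Fintype.card n) ≃ n :=
  (Tuple.sort (hA.eigenvalues ∘ ⇑(Fintype.equivFin n).symm)).trans (Fintype.equivFin n).symm

lemma sortedEig_eq (hA : A.IsHermitian) (k : Fin (Fintype.card n)) :
    sortedEig hA k = hA.eigenvalues (eigPerm hA k) := rfl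

lemma sortedEig_monotone (hA : A.IsHermitian) : Monotone (sortedEig hA) :=
  Tuple.monotone_sort _

lemma sortedEig_mono_mat (hA : A.IsHermitian) (hB : B.IsHermitian)
    (hBA : (B - A).PosSemidef) (k : Fin (Fintype.card n)) :
    sortedEig hA k ≤ sortedEig hB k := by
  classical
  set sB : Finset n := (Finset.Iic k).image (eigPerm hB) with hsB
  set sA : Finset n := (Finset.Ici k).image (eigPerm hA) with hsA
  have hcB : sB.card = (k : ℕ) + 1 := by
    rw [hsB, Finset.card_image_of_injective _ (eigPerm hB).injective, Fin.card_Iic]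
  have hcA : sA.card = Fintype.card n - (k : ℕ) := by
    rw [hsA, Finset.card_image_of_injective _ (eigPerm hA).injective, Fin.card_Ici]
  obtain ⟨x, hx0, hxV, hxW⟩ := exists_mem_inter
    (Submodule.span ℂ ((fun i => ⇑(hB.eigenvectorBasis i)) '' ↑sB))
    (Submodule.span ℂ ((fun i => ⇑(hA.eigenvectorBasis i)) '' ↑sA))
    (by
      rw [span_eig_finrank hB sB, span_eig_finrank hA sA, hcB, hcA]
      have := k.isLt
      omega)
  have h1 : sortedEig hA k * (star x ⬝ᵥ x).re ≤ (star x ⬝ᵥ (A *ᵥ x)).re := by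
    refine quad_ge_of_ge hA sA _ ?_ x hxW
    intro i hi
    obtain ⟨j, hj, rfl⟩ := Finset.mem_image.mp hi
    rw [← sortedEig_eq]
    exact sortedEig_monotone hA (Finset.mem_Ici.mp hj)
  have h2 : (star x ⬝ᵥ (B *ᵥ x)).re ≤ sortedEig hB k * (star x ⬝ᵥ x).re := by
    refine quad_le_of_le hB sB _ ?_ x hxV
    intro i hi
    obtain ⟨j, hj, rfl⟩ := Finset.mem_image.mp hi
    rw [← sortedEig_eq]
    exact sortedEig_monotone hB (Finset.mem_Iic.mp hj)
  have h3 : (star x ⬝ᵥ (A *ᵥ x)).re ≤ (star x ⬝ᵥ (B *ᵥ x)).re := by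
    have := hBA.dotProduct_mulVec_nonneg x
    rw [Matrix.sub_mulVec, dotProduct_sub] at this
    have hre := (Complex.le_def.mp this).1
    simp only [Complex.zero_re, Complex.sub_re] at hre
    linarith
  have h4 : 0 < (star x ⬝ᵥ x).re := by
    have := Matrix.dotProduct_star_self_pos_iff.mpr hx0
    exact (Complex.lt_def.mp this).1.trans_le' le_rfl |>.trans_le (le_refl _) |>.trans_le (le_refl _) |>.trans_le (le_refl _) |> fun h => h
  exact le_of_mul_le_mul_right (by linarith) h4

lemma trace_conj_unitary (U : Matrix.unitaryGroup n ℂ) (M : Matrix n n ℂ) :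
    ((U : Matrix n n ℂ) * M * star (U : Matrix n n ℂ)).trace = M.trace := by
  rw [Matrix.trace_mul_cycle, Unitary.coe_star_mul_self, Matrix.one_mul]

lemma trace_eq_sum_eigenvalues (hA : A.IsHermitian) :
    A.trace = ((∑ i, hA.eigenvalues i : ℝ) : ℂ) := by
  conv_lhs => rw [hA.spectral_theorem, Unitary.conjStarAlgAut_apply]
  rw [trace_conj_unitary, Matrix.trace_diagonal, Complex.ofReal_sum]
  rfl

/-- apply a function to the eigenvalues, `U diag(f ∘ eig) U⁻¹`. -/
def matFun (hA : A.IsHermitian) (f : ℝ → ℝ) : Matrix n n ℂ :=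
  (hA.eigenvectorUnitary : Matrix n n ℂ) *
    Matrix.diagonal (fun i => ((f (hA.eigenvalues i) : ℝ) : ℂ)) *
      star (hA.eigenvectorUnitary : Matrix n n ℂ)

lemma matFun_posSemidef (hA : A.IsHermitian) (f : ℝ → ℝ) (hf : ∀ x, 0 ≤ f x) :
    (matFun hA f).PosSemidef := by
  refine Matrix.PosSemidef.mul_mul_conjTranspose_same ?_ _
  refine Matrix.posSemidef_diagonal_iff.mpr fun i => ?_
  rw [Complex.le_def]
  constructor
  · simpa using hf (hA.eigenvalues i)
  · simp

lemma matFun_mul (hA : A.IsHermitian) (f g : ℝ → ℝ) :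
    matFun hA f * matFun hA g = matFun hA (f * g) := by
  have h1 : star (hA.eigenvectorUnitary : Matrix n n ℂ) *
      ((hA.eigenvectorUnitary : Matrix n n ℂ) *
        (Matrix.diagonal (fun i => ((g (hA.eigenvalues i) : ℝ) : ℂ)) *
          star (hA.eigenvectorUnitary : Matrix n n ℂ))) =
      Matrix.diagonal (fun i => ((g (hA.eigenvalues i) : ℝ) : ℂ)) *
        star (hA.eigenvectorUnitary : Matrix n n ℂ) := by
    rw [← Matrix.mul_assoc, Unitary.coe_star_mul_self, Matrix.one_mul]
  simp only [matFun, Matrix.mul_assoc]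
  rw [h1, ← Matrix.mul_assoc (Matrix.diagonal _) (Matrix.diagonal _),
    Matrix.diagonal_mul_diagonal]
  have h2 : (fun i => ((f (hA.eigenvalues i) : ℝ) : ℂ) * ((g (hA.eigenvalues i) : ℝ) : ℂ))
      = fun i => (((f * g) (hA.eigenvalues i) : ℝ) : ℂ) := by
    funext i
    rw [← Complex.ofReal_mul]
    rfl
  rw [h2]

lemma matFun_sub (hA : A.IsHermitian) (f g : ℝ → ℝ) :
    matFun hA f - matFun hA g = matFun hA (f - g) := by
  rw [matFun, matFun, matFun, ← Matrix.sub_mul, ← Matrix.mul_sub, Matrix.diagonal_sub]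
  have h2 : (fun i => ((f (hA.eigenvalues i) : ℝ) : ℂ) - ((g (hA.eigenvalues i) : ℝ) : ℂ))
      = fun i => (((f - g) (hA.eigenvalues i) : ℝ) : ℂ) := by
    funext i
    rw [← Complex.ofReal_sub]
    rfl
  rw [h2]

lemma matFun_add (hA : A.IsHermitian) (f g : ℝ → ℝ) :
    matFun hA f + matFun hA g = matFun hA (f + g) := by
  rw [matFun, matFun, matFun, ← Matrix.add_mul, ← Matrix.mul_add, Matrix.diagonal_add]
  have h2 : (fun i => ((f (hA.eigenvalues i) : ℝ) : ℂ) + ((g (hA.eigenvalues i) : ℝ) : ℂ))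
      = fun i => (((f + g) (hA.eigenvalues i) : ℝ) : ℂ) := by
    funext i
    rw [← Complex.ofReal_add]
    rfl
  rw [h2]

lemma matFun_id (hA : A.IsHermitian) : matFun hA id = A := by
  conv_rhs => rw [hA.spectral_theorem, Unitary.conjStarAlgAut_apply]
  rw [matFun]
  have hD : (fun i => ((id (hA.eigenvalues i) : ℝ) : ℂ))
      = (RCLike.ofReal ∘ hA.eigenvalues : n → ℂ) := by
    funext i
    show ((hA.eigenvalues i : ℝ) : ℂ) = RCLike.ofReal (hA.eigenvalues i)
    norm_num
  rw [hD]

lemma matFun_trace (hA : A.IsHermitian) (f : ℝ → ℝ) :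
    (matFun hA f).trace = ((∑ i, f (hA.eigenvalues i) : ℝ) : ℂ) := by
  rw [matFun, trace_conj_unitary, Matrix.trace_diagonal, Complex.ofReal_sum]

lemma conjTranspose_mul_self_of_herm (hA : A.IsHermitian) :
    Aᴴ * A = matFun hA (fun x => x ^ 2) := by
  calc Aᴴ * A = A * A := by rw [hA.eq]
    _ = matFun hA id * matFun hA id := by rw [matFun_id]
    _ = matFun hA (id * id) := matFun_mul hA id id
    _ = matFun hA (fun x => x ^ 2) := by
        have h : (id * id : ℝ → ℝ) = fun x => x ^ 2 := by
          funext x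
          simp [sq]
        rw [h]


lemma sum_sortedEig (hA : A.IsHermitian) : ∑ k, sortedEig hA k = A.trace.re := by
  have h : ∑ k, sortedEig hA k = ∑ i, hA.eigenvalues i := by
    rw [show (fun k => sortedEig hA k) = fun k => hA.eigenvalues (eigPerm hA k) from rfl]
    exact Equiv.sum_comp (eigPerm hA) hA.eigenvalues
  rw [h, trace_eq_sum_eigenvalues hA, Complex.ofReal_re]

open scoped MatrixOrder in
lemma psd_eq_sqrt_of_sq_eq {B C : Matrix n n ℂ} (hB : B.PosSemidef) (hC : C.PosSemidef)
    (h : B ^ 2 = C) : B = hC.sqrt := by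
  have h1 : hC.sqrt = cfc Real.sqrt C := by
    rw [hC.1.cfc_eq, Matrix.IsHermitian.cfc, Unitary.conjStarAlgAut_apply]; rfl
  have h2 : CFC.sqrt C = cfc Real.sqrt C := by
    rw [CFC.sqrt_eq_real_sqrt C hC.nonneg, cfcₙ_eq_cfc]
  rw [h1, ← h2, eq_comm]
  exact CFC.sqrt_unique (by rw [← sq]; exact h) hB.nonneg

lemma traceNorm_herm (hA : A.IsHermitian) : traceNorm A = ∑ i, |hA.eigenvalues i| := by
  have habs : (matFun hA (fun x => |x|)).PosSemidef :=
    matFun_posSemidef hA _ (fun x => abs_nonneg x)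
  have hPSD : (Aᴴ * A).PosSemidef := Matrix.posSemidef_conjTranspose_mul_self A
  have hsq : matFun hA (fun x => |x|) ^ 2 = Aᴴ * A := by
    rw [pow_two, matFun_mul, conjTranspose_mul_self_of_herm hA]
    have h : ((fun x => |x|) * (fun x => |x|) : ℝ → ℝ) = fun x => x ^ 2 := by
      funext x
      show |x| * |x| = x ^ 2
      rw [abs_mul_abs_self, sq]
    rw [h]
  have heq := psd_eq_sqrt_of_sq_eq habs hPSD hsq
  rw [traceNorm, dif_pos hPSD, ← heq, matFun_trace, Complex.ofReal_re]

lemma mirsky {ρ σ : Matrix n n ℂ} (hρ : ρ.IsHermitian) (hσ : σ.IsHermitian) :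
    ∑ k, |sortedEig hρ k - sortedEig hσ k| ≤ traceNorm (ρ - σ) := by
  have hΔ : (ρ - σ).IsHermitian := hρ.sub hσ
  set fp : ℝ → ℝ := fun x => max x 0 with hfp
  set fm : ℝ → ℝ := fun x => max (-x) 0 with hfm
  have hPpsd : (matFun hΔ fp).PosSemidef := matFun_posSemidef hΔ _ (fun x => le_max_right _ _)
  have hNpsd : (matFun hΔ fm).PosSemidef := matFun_posSemidef hΔ _ (fun x => le_max_right _ _)
  have hPN : matFun hΔ fp - matFun hΔ fm = ρ - σ := by
    rw [matFun_sub]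
    have h : (fp - fm : ℝ → ℝ) = id := by
      funext x
      show max x 0 - max (-x) 0 = x
      rcases le_total x 0 with h | h
      · rw [max_eq_right h, max_eq_left (by linarith)]; ring
      · rw [max_eq_left h, max_eq_right (by linarith)]; ring
    rw [h, matFun_id]
  have hσP : (σ + matFun hΔ fp).IsHermitian := hσ.add hPpsd.1
  have hρN : (ρ + matFun hΔ fm).IsHermitian := hρ.add hNpsd.1
  have m1 : ∀ k, sortedEig hρ k ≤ sortedEig hσP k := by
    intro k
    refine sortedEig_mono_mat hρ hσP ?_ k
    have h : σ + matFun hΔ fp - ρ = matFun hΔ fm := by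
      have h2 : σ + matFun hΔ fp - ρ - matFun hΔ fm
          = (matFun hΔ fp - matFun hΔ fm) - (ρ - σ) := by abel
      rw [hPN, sub_self] at h2
      exact sub_eq_zero.mp h2
    rw [h]; exact hNpsd
  have m2 : ∀ k, sortedEig hσ k ≤ sortedEig hσP k := by
    intro k
    refine sortedEig_mono_mat hσ hσP ?_ k
    have h : σ + matFun hΔ fp - σ = matFun hΔ fp := by abel
    rw [h]; exact hPpsd
  have m3 : ∀ k, sortedEig hσ k ≤ sortedEig hρN k := by
    intro k
    refine sortedEig_mono_mat hσ hρN ?_ k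
    have h : ρ + matFun hΔ fm - σ = matFun hΔ fp := by
      have h2 : ρ + matFun hΔ fm - σ - matFun hΔ fp
          = (ρ - σ) - (matFun hΔ fp - matFun hΔ fm) := by abel
      rw [hPN, sub_self] at h2
      exact sub_eq_zero.mp h2
    rw [h]; exact hPpsd
  have m4 : ∀ k, sortedEig hρ k ≤ sortedEig hρN k := by
    intro k
    refine sortedEig_mono_mat hρ hρN ?_ k
    have h : ρ + matFun hΔ fm - ρ = matFun hΔ fm := by abel
    rw [h]; exact hNpsd
  have per : ∀ k, |sortedEig hρ k - sortedEig hσ k| ≤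
      (sortedEig hσP k - sortedEig hσ k) + (sortedEig hρN k - sortedEig hρ k) := by
    intro k
    rw [abs_sub_le_iff]
    constructor
    · linarith [m1 k, m4 k]
    · linarith [m2 k, m3 k]
  calc ∑ k, |sortedEig hρ k - sortedEig hσ k|
      ≤ ∑ k, ((sortedEig hσP k - sortedEig hσ k) + (sortedEig hρN k - sortedEig hρ k)) :=
        Finset.sum_le_sum fun k _ => per k
    _ = (σ + matFun hΔ fp).trace.re - σ.trace.re + ((ρ + matFun hΔ fm).trace.re - ρ.trace.re) := by
        rw [Finset.sum_add_distrib, Finset.sum_sub_distrib, Finset.sum_sub_distrib,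
          sum_sortedEig, sum_sortedEig, sum_sortedEig, sum_sortedEig]
    _ = (matFun hΔ fp).trace.re + (matFun hΔ fm).trace.re := by
        rw [Matrix.trace_add, Matrix.trace_add, Complex.add_re, Complex.add_re]
        ring
    _ = ∑ i, |hΔ.eigenvalues i| := by
        rw [matFun_trace, matFun_trace, Complex.ofReal_re, Complex.ofReal_re,
          ← Finset.sum_add_distrib]
        refine Finset.sum_congr rfl fun i _ => ?_
        show max (hΔ.eigenvalues i) 0 + max (-(hΔ.eigenvalues i)) 0 = |hΔ.eigenvalues i|
        rcases le_total (hΔ.eigenvalues i) 0 with h | h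
        · rw [max_eq_right h, max_eq_left (by linarith), abs_of_nonpos h]; ring
        · rw [max_eq_left h, max_eq_right (by linarith), abs_of_nonneg h]; ring
    _ = traceNorm (ρ - σ) := (traceNorm_herm hΔ).symm

lemma entropy_herm (hA : A.IsHermitian) : entropy A = ∑ i, negxlog2 (hA.eigenvalues i) := by
  unfold entropy
  rw [dif_pos hA]

lemma entropy_eq_sorted (hA : A.IsHermitian) :
    entropy A = ∑ k, negxlog2 (sortedEig hA k) := by
  rw [entropy_herm hA]
  exact (Equiv.sum_comp (eigPerm hA) (fun i => negxlog2 (hA.eigenvalues i))).symm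

lemma negxlog2_eq (x : ℝ) (hx : 0 ≤ x) : negxlog2 x = Real.negMulLog x / Real.log 2 := by
  rcases eq_or_lt_of_le hx with h | h
  · rw [negxlog2, if_pos (le_of_eq h.symm), ← h, Real.negMulLog_zero, zero_div]
  · rw [negxlog2, if_neg (not_le.mpr h), Real.negMulLog, Real.logb]
    ring

end FannesAux

lemma binEntropy2_eq (x : ℝ) : binEntropy x = Real.binEntropy x / Real.log 2 := by
  rw [binEntropy, Real.binEntropy, Real.logb, Real.logb, Real.log_inv, Real.log_inv]
  ring


/-- the Fannes inequality. -/
theorem fannes_inequality {n : Type} [Fintype n] [DecidableEq n]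
    (ρ σ : Matrix n n ℂ) (hρ : IsDensity ρ) (hσ : IsDensity σ) (ε : ℝ)
    (h1 : (1 / 2) * traceNorm (ρ - σ) ≤ ε)
    (h2 : ε ≤ 1 - 1 / (Fintype.card n : ℝ)) :
    |entropy ρ - entropy σ| ≤ ε * Real.logb 2 ((Fintype.card n : ℝ) - 1) + binEntropy ε := by
  classical
  have hρh : ρ.IsHermitian := hρ.1.1
  have hσh : σ.IsHermitian := hσ.1.1
  set p : Fin (Fintype.card n) → ℝ := FannesAux.sortedEig hρh with hp
  set q : Fin (Fintype.card n) → ℝ := FannesAux.sortedEig hσh with hq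
  have hp0 : ∀ k, 0 ≤ p k := fun k => hρ.1.eigenvalues_nonneg _
  have hq0 : ∀ k, 0 ≤ q k := fun k => hσ.1.eigenvalues_nonneg _
  have hp1 : ∑ k, p k = 1 := by
    rw [hp, FannesAux.sum_sortedEig, hρ.2, Complex.one_re]
  have hq1 : ∑ k, q k = 1 := by
    rw [hq, FannesAux.sum_sortedEig, hσ.2, Complex.one_re]
  have hl1 : (∑ k, |p k - q k|) / 2 ≤ ε := by
    have := FannesAux.mirsky hρh hσh
    rw [← hp, ← hq] at this
    linarith
  have hcard : (Fintype.card (Fin (Fintype.card n)) : ℝ) = (Fintype.card n : ℝ) := by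
    rw [Fintype.card_fin]
  have key := classical_fannes p q hp0 hq0 hp1 hq1 ε hl1 (by rw [hcard]; exact h2)
  rw [hcard] at key
  have hlog2 : (0:ℝ) < Real.log 2 := Real.log_pos (by norm_num)
  have hentρ : entropy ρ = (∑ k, Real.negMulLog (p k)) / Real.log 2 := by
    rw [FannesAux.entropy_eq_sorted hρh, ← hp, Finset.sum_div]
    exact Finset.sum_congr rfl fun k _ => FannesAux.negxlog2_eq _ (hp0 k)
  have hentσ : entropy σ = (∑ k, Real.negMulLog (q k)) / Real.log 2 := by
    rw [FannesAux.entropy_eq_sorted hσh, ← hq, Finset.sum_div]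
    exact Finset.sum_congr rfl fun k _ => FannesAux.negxlog2_eq _ (hq0 k)
  have hRHS : ε * Real.logb 2 ((Fintype.card n : ℝ) - 1) + binEntropy ε =
      (Real.binEntropy ε + ε * Real.log ((Fintype.card n : ℝ) - 1)) / Real.log 2 := by
    rw [binEntropy2_eq, Real.logb]
    ring
  rw [hentρ, hentσ, hRHS, div_sub_div_same, abs_div, abs_of_pos hlog2]
  rw [div_eq_mul_inv, div_eq_mul_inv]
  exact mul_le_mul_of_nonneg_right key (le_of_lt (inv_pos.mpr hlog2))
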